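/- Let p > 2 and let g : (0,1) → (0,1) be the function implicitly defined by g(t)^{p−2}(1 − g(t)²) = t^{p−2}(1 − t²) together with g(t) ≠ t for t ≠ √((p−2)/p) and g(√((p−2)/p)) = √((p−2)/p) (this determines g uniquely). Then g is strictly decreasing on (0,1), g(t) → 1 as t → 0⁺, and g(t) → 0 as t → 1⁻. -/

import Mathlib

open Set Filter Topology

/-- for p > 2, the function `g : (0,1) → (0,1)` implicitly defined by
`g(t)^{p−2}(1−g(t)²) = t^{p−2}(1−t²)`, `g(t) ≠ t` for `t ≠ √((p−2)/p)` (and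
`g(√((p−2)/p)) = √((p−2)/p)`, which is forced) is strictly decreasing on `(0,1)`, with
`g(t) → 1` as `t → 0⁺` and `g(t) → 0` as `t → 1⁻`. -/
theorem implicit_companion_strictAnti (p : ℝ) (hp : 2 < p) (g : ℝ → ℝ)
    (hmap : ∀ t ∈ Ioo (0 : ℝ) 1, g t ∈ Ioo (0 : ℝ) 1)
    (heq : ∀ t ∈ Ioo (0 : ℝ) 1,
      g t ^ (p - 2) * (1 - g t ^ 2) = t ^ (p - 2) * (1 - t ^ 2))
    (hne : ∀ t ∈ Ioo (0 : ℝ) 1, t ≠ Real.sqrt ((p - 2) / p) → g t ≠ t) :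
    StrictAntiOn g (Ioo 0 1) ∧
    Tendsto g (nhdsWithin 0 (Ioi 0)) (nhds 1) ∧
    Tendsto g (nhdsWithin 1 (Iio 1)) (nhds 0) := by
  set m := Real.sqrt ((p - 2) / p) with hm_def
  set f : ℝ → ℝ := fun t => t ^ (p - 2) * (1 - t ^ 2) with hf_def
  have hp0 : 0 < p := by linarith
  have hfrac : (p-2)/p ∈ Ioo (0:ℝ) 1 := ⟨div_pos (by linarith) hp0, by rw [div_lt_one hp0]; linarith⟩
  have hm0 : 0 < m := Real.sqrt_pos.2 hfrac.1
  have hmsq : m ^ 2 = (p-2)/p := Real.sq_sqrt hfrac.1.le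
  have hm1 : m < 1 := by nlinarith [hmsq, hfrac.2, hm0]
  -- continuity of f
  have hfc : Continuous f := by
    rw [continuous_iff_continuousAt]
    intro x
    exact (Real.continuousAt_rpow_const x (p-2) (Or.inr (by linarith))).mul (by fun_prop)
  -- derivative
  have hderiv : ∀ t : ℝ, 0 < t → HasDerivAt f (t ^ (p-3) * ((p-2) - p * t^2)) t := by
    intro t ht
    have h1 : HasDerivAt (fun x : ℝ => x ^ (p-2)) ((p-2) * t ^ (p-2-1)) t :=
      Real.hasDerivAt_rpow_const (Or.inl ht.ne')
    have h2 : HasDerivAt (fun x : ℝ => 1 - x ^ 2) (-(2*t)) t := by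
      simpa using ((hasDerivAt_pow 2 t).const_sub 1)
    have h3 := h1.mul h2
    refine h3.congr_deriv ?_
    have hts : t ^ (p-2) = t ^ (p-3) * t := by
      rw [show p - 2 = (p-3) + 1 by ring, Real.rpow_add ht, Real.rpow_one]
    have hts2 : t ^ (p-2-1) = t ^ (p-3) := by rw [show p-2-1 = p-3 by ring]
    rw [hts2, hts]; ring
  have hmono : StrictMonoOn f (Icc 0 m) := by
    apply strictMonoOn_of_deriv_pos (convex_Icc _ _) hfc.continuousOn
    intro t ht
    rw [interior_Icc] at ht
    rw [(hderiv t ht.1).deriv]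
    have h1 : (0:ℝ) < t ^ (p-3) := Real.rpow_pos_of_pos ht.1 _
    have h2 : t^2 < (p-2)/p := by
      calc t^2 < m^2 := by nlinarith [ht.2, ht.1]
      _ = (p-2)/p := hmsq
    have h4 : 0 < (p-2) - p*t^2 := by
      rw [lt_div_iff₀ hp0] at h2; nlinarith
    positivity
  have hanti : StrictAntiOn f (Icc m 1) := by
    apply strictAntiOn_of_deriv_neg (convex_Icc _ _) hfc.continuousOn
    intro t ht
    rw [interior_Icc] at ht
    have ht0 : 0 < t := hm0.trans ht.1
    rw [(hderiv t ht0).deriv]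
    have h1 : (0:ℝ) < t ^ (p-3) := Real.rpow_pos_of_pos ht0 _
    have h2 : (p-2)/p < t^2 := by
      calc (p-2)/p = m^2 := hmsq.symm
      _ < t^2 := by nlinarith [ht.1, hm0]
    have h4 : (p-2) - p*t^2 < 0 := by
      rw [div_lt_iff₀ hp0] at h2; nlinarith
    nlinarith
  have hfeq : ∀ t ∈ Ioo (0:ℝ) 1, f (g t) = f t := heq
  -- g m = m
  have hmIoo : m ∈ Ioo (0:ℝ) 1 := ⟨hm0, hm1⟩
  have hgm : g m = m := by
    rcases lt_trichotomy (g m) m with h | h | h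
    · exfalso
      have := hmono (⟨(hmap m hmIoo).1.le, h.le⟩) ⟨hm0.le, le_refl m⟩ h
      rw [hfeq m hmIoo] at this; exact lt_irrefl _ this
    · exact h
    · exfalso
      have := hanti ⟨le_refl m, hm1.le⟩ ⟨h.le, (hmap m hmIoo).2.le⟩ h
      rw [hfeq m hmIoo] at this; exact lt_irrefl _ this
  -- side swapping
  have hside_lt : ∀ t ∈ Ioo (0:ℝ) 1, t < m → m < g t := by
    intro t ht htm
    by_contra h
    push_neg at h
    have hinj := hmono.injOn ⟨(hmap t ht).1.le, h⟩ ⟨ht.1.le, htm.le⟩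
      (hfeq t ht)
    exact hne t ht (ne_of_lt htm) hinj
  have hside_gt : ∀ t ∈ Ioo (0:ℝ) 1, m < t → g t < m := by
    intro t ht htm
    by_contra h
    push_neg at h
    have hinj := hanti.injOn ⟨h, (hmap t ht).2.le⟩ ⟨htm.le, ht.2.le⟩
      (hfeq t ht)
    exact hne t ht (ne_of_gt htm) hinj
  -- strict antitonicity
  have hSA : StrictAntiOn g (Ioo 0 1) := by
    intro s hs t ht hst
    rcases lt_trichotomy t m with htm | htm | htm
    · -- t < m : s < t ≤ ... all left of m
      have hsm : s < m := hst.trans htm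
      have hfst : f s < f t := hmono ⟨hs.1.le, hsm.le⟩ ⟨ht.1.le, htm.le⟩ hst
      have hgs : m < g s := hside_lt s hs hsm
      have hgt : m < g t := hside_lt t ht htm
      have : f (g s) < f (g t) := by rw [hfeq s hs, hfeq t ht]; exact hfst
      by_contra hc
      push_neg at hc
      rcases eq_or_lt_of_le hc with he | hl
      · rw [he] at this; exact lt_irrefl _ this
      · have := hanti ⟨hgs.le, (hmap s hs).2.le⟩ ⟨hgt.le, (hmap t ht).2.le⟩ hl
        linarith
    · -- t = m
      have hsm : s < m := htm ▸ hst
      have := hside_lt s hs hsm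
      rw [htm, hgm]; exact this
    · -- m < t
      have hgt : g t < m := hside_gt t ht htm
      rcases lt_trichotomy s m with hsm | hsm | hsm
      · exact hgt.trans (hside_lt s hs hsm)
      · rw [hsm, hgm]; exact hgt
      · have hgs : g s < m := hside_gt s hs hsm
        have hfst : f t < f s := hanti ⟨hsm.le, hs.2.le⟩ ⟨htm.le, ht.2.le⟩ hst
        have hf2 : f (g t) < f (g s) := by rw [hfeq s hs, hfeq t ht]; exact hfst
        by_contra hc
        push_neg at hc
        rcases eq_or_lt_of_le hc with he | hl
        · rw [he] at hf2; exact lt_irrefl _ hf2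
        · have := hmono ⟨(hmap s hs).1.le, hgs.le⟩ ⟨(hmap t ht).1.le, hgt.le⟩ hl
          linarith
  refine ⟨hSA, ?_, ?_⟩
  · -- limit at 0⁺
    have hf0 : Tendsto f (nhdsWithin 0 (Ioi 0)) (nhds 0) := by
      have : f 0 = 0 := by
        simp [hf_def, Real.zero_rpow (by linarith : p - 2 ≠ 0)]
      have h : Tendsto f (nhdsWithin 0 (Ioi 0)) (nhds (f 0)) :=
        (hfc.tendsto 0).mono_left nhdsWithin_le_nhds
      rwa [this] at h
    rw [tendsto_order]
    constructor
    · intro a ha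
      set y := max m a with hy_def
      have hym : m ≤ y := le_max_left _ _
      have hy1 : y < 1 := max_lt hm1 ha
      have hy0 : 0 < y := lt_of_lt_of_le hm0 hym
      have hfy : 0 < f y := by
        have h1 : (0:ℝ) < y ^ (p-2) := Real.rpow_pos_of_pos hy0 _
        have h2 : (0:ℝ) < 1 - y^2 := by nlinarith
        positivity
      have hev1 : ∀ᶠ t in nhdsWithin (0:ℝ) (Ioi 0), f t < f y :=
        hf0.eventually_lt_const hfy
      have hev2 : ∀ᶠ t in nhdsWithin (0:ℝ) (Ioi 0), t ∈ Ioo (0:ℝ) m :=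
        Filter.eventually_of_mem (Ioo_mem_nhdsGT hm0) (fun x hx => hx)
      filter_upwards [hev1, hev2] with t h1 h2
      have ht : t ∈ Ioo (0:ℝ) 1 := ⟨h2.1, h2.2.trans hm1⟩
      have hgt : m < g t := hside_lt t ht h2.2
      have hfg : f (g t) < f y := by rw [hfeq t ht]; exact h1
      have : y < g t := by
        by_contra hc
        push_neg at hc
        rcases eq_or_lt_of_le hc with he | hl
        · rw [he] at hfg; exact lt_irrefl _ hfg
        · have := hanti ⟨hgt.le, (hmap t ht).2.le⟩ ⟨hym, hy1.le⟩ hl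
          linarith
      exact lt_of_le_of_lt (le_max_right m a) this
    · intro a ha
      have hev : ∀ᶠ t in nhdsWithin (0:ℝ) (Ioi 0), t ∈ Ioo (0:ℝ) 1 :=
        Filter.eventually_of_mem (Ioo_mem_nhdsGT one_pos) (fun x hx => hx)
      filter_upwards [hev] with t h1
      exact (hmap t h1).2.trans ha
  · -- limit at 1⁻
    have hf1 : Tendsto f (nhdsWithin 1 (Iio 1)) (nhds 0) := by
      have hzero : f 1 = 0 := by simp [hf_def]
      have h : Tendsto f (nhdsWithin 1 (Iio 1)) (nhds (f 1)) :=
        (hfc.tendsto 1).mono_left nhdsWithin_le_nhds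
      rwa [hzero] at h
    rw [tendsto_order]
    constructor
    · intro a ha
      have hev : ∀ᶠ t in nhdsWithin (1:ℝ) (Iio 1), t ∈ Ioo (0:ℝ) 1 :=
        Filter.eventually_of_mem (Ioo_mem_nhdsLT zero_lt_one) (fun x hx => hx)
      filter_upwards [hev] with t h1
      exact ha.trans (hmap t h1).1
    · intro a ha
      set y := min m a with hy_def
      have hym : y ≤ m := min_le_left _ _
      have hy0 : 0 < y := lt_min hm0 ha
      have hfy : 0 < f y := by
        have h1 : (0:ℝ) < y ^ (p-2) := Real.rpow_pos_of_pos hy0 _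
        have h2 : (0:ℝ) < 1 - y^2 := by nlinarith [min_le_left m a, hm1, hy0]
        positivity
      have hev1 : ∀ᶠ t in nhdsWithin (1:ℝ) (Iio 1), f t < f y :=
        hf1.eventually_lt_const hfy
      have hev2 : ∀ᶠ t in nhdsWithin (1:ℝ) (Iio 1), t ∈ Ioo m 1 :=
        Filter.eventually_of_mem (Ioo_mem_nhdsLT hm1) (fun x hx => hx)
      filter_upwards [hev1, hev2] with t h1 h2
      have ht : t ∈ Ioo (0:ℝ) 1 := ⟨hm0.trans h2.1, h2.2⟩
      have hgt : g t < m := hside_gt t ht h2.1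
      have hfg : f (g t) < f y := by rw [hfeq t ht]; exact h1
      have : g t < y := by
        by_contra hc
        push_neg at hc
        rcases eq_or_lt_of_le hc with he | hl
        · rw [← he] at hfg; exact lt_irrefl _ hfg
        · have := hmono ⟨hy0.le, hym⟩ ⟨(hmap t ht).1.le, hgt.le⟩ hl
          linarith
      exact this.trans_le (min_le_right m a)
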